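/- Let X and V be nonempty finite types and let Z := X × V be the discrete phase space. Let π̄ : Z × Z → ℝ be an everywhere positive probability density and ρ₀ : X → ℝ a probability density (ρ₀ ≥ 0, Σₓ ρ₀(x) = 1). Call a probability density π : Z × Z → ℝ feasible if Σ_{v ∈ V} Σ_{z' ∈ Z} π((x,v), z') = ρ₀(x) for every x ∈ X. Define π* ((x,v), z') := ρ₀(x) · π̄((x,v), z') / (Σ_{v' ∈ V} Σ_{z'' ∈ Z} π̄((x,v'), z'')). Then π* is feasible, and for every feasible π one has KL(π ‖ π̄) ≥ KL(π* ‖ π̄), with equality if and only if π = π*; i.e., π* is the unique KL-projection of π̄ onto the constraint that the position marginal at the first time point equals ρ₀. -/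

import Mathlib

/-- A probability density on a finite type. -/
def IsProbDensity {S : Type*} [Fintype S] (α : S → ℝ) : Prop :=
  (∀ s, 0 ≤ α s) ∧ (∑ s, α s) = 1

/-- Relative entropy of densities on a finite type (with the convention `0 log 0 = 0`,
which holds automatically since `Real.log 0 = 0`). -/
noncomputable def KL {S : Type*} [Fintype S] (α β : S → ℝ) : ℝ :=
  ∑ s, α s * Real.log (α s / β s)

/-- Pointwise inequality `a - b ≤ a log(a/b)` with equality iff `a = b`. -/
lemma klAux_term_ineq (a b : ℝ) (ha : 0 ≤ a) (hb : 0 ≤ b) (hab : b = 0 → a = 0) :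
    a - b ≤ a * Real.log (a / b) ∧ (a - b = a * Real.log (a / b) ↔ a = b) := by
  rcases eq_or_lt_of_le ha with h | h
  · refine ⟨by simp [← h]; linarith, ?_, ?_⟩
    · intro he; rw [← h] at he ⊢; simp at he; linarith
    · intro he; rw [← he, ← h]; simp
  · have hbpos : 0 < b := (hb).lt_of_ne fun e => by have := hab e.symm; linarith
    have hd : 0 < b / a := by positivity
    have hlog := Real.log_le_sub_one_of_pos hd
    have hlogeq : Real.log (a / b) = - Real.log (b / a) := by
      rw [← Real.log_inv]; congr 1; field_simp
    have hba : a * (b / a - 1) = b - a := by field_simp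
    have key2 : a * Real.log (b / a) ≤ b - a := by
      have := mul_le_mul_of_nonneg_left hlog h.le
      linarith
    constructor
    · rw [hlogeq, mul_neg]; linarith
    · constructor
      · intro he
        by_contra hne
        have hne' : b / a ≠ 1 := by
          intro h1; apply hne
          field_simp at h1; linarith
        have hstrict := Real.log_lt_sub_one_of_pos hd hne'
        have k : a * Real.log (b / a) < b - a := by
          have := mul_lt_mul_of_pos_left hstrict h
          linarith
        rw [hlogeq, mul_neg] at he; linarith
      · intro he; rw [he, div_self hbpos.ne']; simp


/-- Gibbs' inequality on a finite type, with equality characterization. -/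
lemma klAux_gibbs {S : Type*} [Fintype S] (α β : S → ℝ)
    (hα : IsProbDensity α) (hβ : IsProbDensity β)
    (habs : ∀ s, β s = 0 → α s = 0) :
    0 ≤ KL α β ∧ (KL α β = 0 ↔ α = β) := by
  have key := fun s => klAux_term_ineq (α s) (β s) (hα.1 s) (hβ.1 s) (habs s)
  have hsum0 : ∑ s, (α s - β s) = 0 := by
    rw [Finset.sum_sub_distrib, hα.2, hβ.2]; ring
  have hle : ∑ s, (α s - β s) ≤ ∑ s, α s * Real.log (α s / β s) :=
    Finset.sum_le_sum fun s _ => (key s).1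
  have hKL : KL α β = ∑ s, α s * Real.log (α s / β s) := rfl
  constructor
  · rw [hKL]; linarith
  · rw [hKL]
    constructor
    · intro h
      have heq : ∑ s, (α s - β s) = ∑ s, α s * Real.log (α s / β s) := by rw [hsum0, h]
      have := (Finset.sum_eq_sum_iff_of_le (fun s _ => (key s).1)).1 heq
      funext s
      exact ((key s).2).1 (this s (Finset.mem_univ s))
    · intro h
      subst h
      refine Finset.sum_eq_zero fun s _ => ?_
      rcases eq_or_ne (α s) 0 with h0 | h0
      · simp [h0]
      · rw [div_self h0]; simp

lemma klAux_sum_split {X V : Type*} [Fintype X] [Fintype V] (f : (X × V) × (X × V) → ℝ) :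
    ∑ p, f p = ∑ x : X, ∑ v : V, ∑ z' : X × V, f ((x, v), z') := by
  rw [Fintype.sum_prod_type (f := fun p : (X × V) × (X × V) => f p)]
  exact Fintype.sum_prod_type (f := fun q : X × V => ∑ z' : X × V, f (q, z'))

lemma klAux_sum_weight {X V : Type*} [Fintype X] [Fintype V]
    (w : (X × V) × (X × V) → ℝ) (g : X → ℝ) :
    ∑ p, w p * g p.1.1 = ∑ x : X, (∑ v : V, ∑ z' : X × V, w ((x, v), z')) * g x := by
  rw [klAux_sum_split (fun p => w p * g p.1.1)]
  refine Finset.sum_congr rfl fun x _ => ?_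
  rw [Finset.sum_mul]
  exact Finset.sum_congr rfl fun v _ => by rw [Finset.sum_mul]

/-- The explicit update `π*((x,v),z') = ρ₀(x) π̄((x,v),z') / Σ_{v',z''} π̄((x,v'),z'')` is the
unique KL-projection of an everywhere positive prior `π̄` onto the set of couplings whose
position marginal at the first time point equals `ρ₀`. -/
theorem kl_projection_first_position_marginal
    (X V : Type*) [Fintype X] [Fintype V] [Nonempty X] [Nonempty V]
    (pibar : (X × V) × (X × V) → ℝ)
    (hpibar : IsProbDensity pibar) (hpos : ∀ p, 0 < pibar p)
    (ρ₀ : X → ℝ) (hρ₀ : IsProbDensity ρ₀)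
    (pistar : (X × V) × (X × V) → ℝ)
    (hpistar : pistar = fun p =>
      ρ₀ p.1.1 * pibar p / (∑ v' : V, ∑ z'' : X × V, pibar ((p.1.1, v'), z''))) :
    (IsProbDensity pistar ∧
      ∀ x : X, (∑ v : V, ∑ z' : X × V, pistar ((x, v), z')) = ρ₀ x) ∧
    ∀ π : (X × V) × (X × V) → ℝ,
      IsProbDensity π →
      (∀ x : X, (∑ v : V, ∑ z' : X × V, π ((x, v), z')) = ρ₀ x) →
      (KL pistar pibar ≤ KL π pibar ∧ (KL π pibar = KL pistar pibar ↔ π = pistar)) := by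
  have hMpos : ∀ x : X, 0 < ∑ v' : V, ∑ z'' : X × V, pibar ((x, v'), z'') := fun x =>
    Finset.sum_pos (fun v _ => Finset.sum_pos (fun z _ => hpos _) Finset.univ_nonempty)
      Finset.univ_nonempty
  -- nonnegativity of pistar
  have hps_nonneg : ∀ p, 0 ≤ pistar p := by
    intro p; rw [hpistar]
    exact div_nonneg (mul_nonneg (hρ₀.1 _) (hpos _).le) (hMpos _).le
  -- position marginal of pistar
  have hfeas : ∀ x : X, (∑ v : V, ∑ z' : X × V, pistar ((x, v), z')) = ρ₀ x := by
    intro x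
    have h1 : (∑ v : V, ∑ z' : X × V, pistar ((x, v), z')) =
        (∑ v : V, ∑ z' : X × V, pibar ((x, v), z')) *
          (ρ₀ x / (∑ v' : V, ∑ z'' : X × V, pibar ((x, v'), z''))) := by
      rw [Finset.sum_mul]
      refine Finset.sum_congr rfl fun v _ => ?_
      rw [Finset.sum_mul]
      refine Finset.sum_congr rfl fun z _ => ?_
      rw [hpistar]; ring
    rw [h1, mul_comm, div_mul_cancel₀ _ (hMpos x).ne']
  -- pistar is a probability density
  have hps_density : IsProbDensity pistar := by
    refine ⟨hps_nonneg, ?_⟩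
    rw [klAux_sum_split pistar]
    rw [Finset.sum_congr rfl fun x _ => hfeas x]
    exact hρ₀.2
  -- ratio identity
  have hratio : ∀ p : (X × V) × (X × V), pistar p / pibar p =
      ρ₀ p.1.1 / (∑ v' : V, ∑ z'' : X × V, pibar ((p.1.1, v'), z'')) := by
    intro p
    rw [hpistar]
    have h1 := (hpos p).ne'
    have h2 := (hMpos p.1.1).ne'
    field_simp
  -- KL pistar pibar = sum over x
  have hA : KL pistar pibar =
      ∑ x : X, ρ₀ x * Real.log (ρ₀ x / (∑ v' : V, ∑ z'' : X × V, pibar ((x, v'), z''))) := by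
    have h1 : KL pistar pibar = ∑ p, pistar p *
        Real.log (ρ₀ p.1.1 / (∑ v' : V, ∑ z'' : X × V, pibar ((p.1.1, v'), z''))) := by
      refine Finset.sum_congr rfl fun p _ => ?_
      rw [hratio p]
    rw [h1, klAux_sum_weight pistar
      (fun x => Real.log (ρ₀ x / (∑ v' : V, ∑ z'' : X × V, pibar ((x, v'), z''))))]
    exact Finset.sum_congr rfl fun x _ => by rw [hfeas x]
  refine ⟨⟨hps_density, hfeas⟩, ?_⟩
  intro π hπ hfeasπ
  -- absolute continuity of π w.r.t. pistar
  have habs : ∀ p, pistar p = 0 → π p = 0 := by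
    intro p hp
    rw [hpistar] at hp
    have hρ0 : ρ₀ p.1.1 = 0 := by
      rcases mul_eq_zero.1 (div_eq_zero_iff.1 hp |>.resolve_right (hMpos p.1.1).ne') with h | h
      · exact h
      · exact absurd h (hpos p).ne'
    have hsum : (∑ v : V, ∑ z' : X × V, π ((p.1.1, v), z')) = 0 := by
      rw [hfeasπ p.1.1, hρ0]
    have h1 : ∀ v ∈ Finset.univ, (∑ z' : X × V, π ((p.1.1, v), z')) = 0 :=
      (Finset.sum_eq_zero_iff_of_nonneg fun v _ =>
        Finset.sum_nonneg fun z _ => hπ.1 _).1 hsum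
    have h2 : ∀ z ∈ Finset.univ, π ((p.1.1, p.1.2), z) = 0 :=
      (Finset.sum_eq_zero_iff_of_nonneg fun z _ => hπ.1 _).1 (h1 p.1.2 (Finset.mem_univ _))
    exact h2 p.2 (Finset.mem_univ _)
  -- chain rule decomposition
  have hterm : ∀ p, π p * Real.log (π p / pibar p) =
      π p * Real.log (π p / pistar p) +
      π p * Real.log (ρ₀ p.1.1 / (∑ v' : V, ∑ z'' : X × V, pibar ((p.1.1, v'), z''))) := by
    intro p
    rcases eq_or_lt_of_le (hπ.1 p) with h | h
    · simp [← h]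
    · have hle1 : π p ≤ ∑ z' : X × V, π (p.1, z') :=
        Finset.single_le_sum (f := fun z => π (p.1, z)) (fun z _ => hπ.1 _) (Finset.mem_univ p.2)
      have hle2 : (∑ z' : X × V, π (p.1, z')) ≤ ∑ v : V, ∑ z' : X × V, π ((p.1.1, v), z') :=
        Finset.single_le_sum (f := fun v => ∑ z' : X × V, π ((p.1.1, v), z'))
          (fun v _ => Finset.sum_nonneg fun z _ => hπ.1 _) (Finset.mem_univ p.1.2)
      have hx : 0 < ρ₀ p.1.1 := by
        rw [← hfeasπ p.1.1]; exact lt_of_lt_of_le h (le_trans hle1 hle2)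
      have hps : 0 < pistar p := by
        rw [hpistar]; exact div_pos (mul_pos hx (hpos p)) (hMpos _)
      rw [Real.log_div h.ne' (hpos p).ne', Real.log_div h.ne' hps.ne',
        Real.log_div hx.ne' (hMpos p.1.1).ne']
      have hlog : Real.log (pistar p) = Real.log (ρ₀ p.1.1) + Real.log (pibar p) -
          Real.log (∑ v' : V, ∑ z'' : X × V, pibar ((p.1.1, v'), z'')) := by
        rw [hpistar]
        rw [Real.log_div (mul_pos hx (hpos p)).ne' (hMpos p.1.1).ne', Real.log_mul hx.ne' (hpos p).ne']
      rw [hlog]; ring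
  have hB : KL π pibar = KL π pistar +
      ∑ x : X, ρ₀ x * Real.log (ρ₀ x / (∑ v' : V, ∑ z'' : X × V, pibar ((x, v'), z''))) := by
    have h1 : KL π pibar = ∑ p, (π p * Real.log (π p / pistar p) +
        π p * Real.log (ρ₀ p.1.1 / (∑ v' : V, ∑ z'' : X × V, pibar ((p.1.1, v'), z'')))) :=
      Finset.sum_congr rfl fun p _ => hterm p
    rw [h1, Finset.sum_add_distrib]
    congr 1
    rw [klAux_sum_weight π
      (fun x => Real.log (ρ₀ x / (∑ v' : V, ∑ z'' : X × V, pibar ((x, v'), z''))))]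
    exact Finset.sum_congr rfl fun x _ => by rw [hfeasπ x]
  obtain ⟨hgib0, hgibeq⟩ := klAux_gibbs π pistar hπ hps_density habs
  constructor
  · rw [hB, hA]; linarith
  · rw [hB, hA]
    constructor
    · intro h
      exact hgibeq.1 (by linarith)
    · intro h
      rw [hgibeq.2 h]; ring
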